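/- Let 1 < p < P be real numbers, set θ := p/P ∈ (0,1), and for each integer j ≥ 0 set ε_j := θ^{-j} - 1 and C(ε) := (1+ε)^p/(1+pε). Then for every κ > 0 the partial products ∏_{j=0}^n C(ε_j)^{κ θ^j} are uniformly bounded in n; in fact ∏_{j=0}^n C(ε_j)^{κ θ^j} ≤ exp( κ(p-1) log(1/θ) · θ/(1-θ)^2 ) for every n ≥ 0. -/

import Mathlib

/-- uniform boundedness of the Moser iteration products.  With
`θ = p/P ∈ (0,1)`, `ε_j = θ^{-j} - 1` (so `1 + ε_j = (P/p)^j`) and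
`C(ε) = (1+ε)^p/(1+pε)`, for every `κ > 0` and every `n`,
`∏_{j=0}^n C(ε_j)^{κ θ^j} ≤ exp(κ (p-1) log(1/θ) · θ/(1-θ)^2)`. -/
theorem stmt_5 (p P : ℝ) (hp : 1 < p) (hP : p < P) :
    ∀ κ > (0:ℝ), ∀ n : ℕ,
      (∏ j ∈ Finset.range (n + 1),
        ((1 + ((P / p) ^ j - 1)) ^ p / (1 + p * ((P / p) ^ j - 1))) ^ (κ * (p / P) ^ j)) ≤
      Real.exp (κ * (p - 1) * Real.log (1 / (p / P)) * ((p / P) / (1 - p / P) ^ 2)) := by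
  intro κ hκ n
  have hp0 : (0:ℝ) < p := lt_trans one_pos hp
  have hP0 : (0:ℝ) < P := lt_trans hp0 hP
  set θ : ℝ := p / P with hθdef
  have hθ0 : 0 < θ := div_pos hp0 hP0
  have hθ1 : θ < 1 := (div_lt_one hP0).mpr hP
  set r : ℝ := P / p with hrdef
  have hr1 : 1 < r := (one_lt_div hp0).mpr hP
  have hr0 : 0 < r := lt_trans one_pos hr1
  have hlogr : 0 ≤ Real.log r := Real.log_nonneg hr1.le
  set c : ℝ := κ * (p - 1) * Real.log r with hcdef
  have hc0 : 0 ≤ c := by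
    apply mul_nonneg (mul_nonneg hκ.le (by linarith)) hlogr
  have hrinv : 1 / θ = r := one_div_div p P
  -- pointwise bound
  have key : ∀ j ∈ Finset.range (n + 1),
      ((1 + ((P / p) ^ j - 1)) ^ p / (1 + p * ((P / p) ^ j - 1))) ^ (κ * θ ^ j)
        ≤ Real.exp (c * ((j : ℝ) * θ ^ j)) := by
    intro j _
    have hrj1 : (1:ℝ) ≤ r ^ j := one_le_pow₀ hr1.le
    have hrj0 : (0:ℝ) < r ^ j := lt_of_lt_of_le one_pos hrj1
    have hbase : 1 + ((P / p) ^ j - 1) = r ^ j := by rw [hrdef]; ring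
    have hden : r ^ j ≤ 1 + p * (r ^ j - 1) := by nlinarith
    have hden0 : (0:ℝ) < 1 + p * (r ^ j - 1) := lt_of_lt_of_le hrj0 hden
    have hexp0 : (0:ℝ) ≤ κ * θ ^ j := mul_nonneg hκ.le (pow_nonneg hθ0.le j)
    have hB : (r ^ j) ^ p / (1 + p * (r ^ j - 1)) ≤ (r ^ j) ^ (p - 1) := by
      rw [div_le_iff₀ hden0]
      calc (r ^ j) ^ p = (r ^ j) ^ (p - 1) * (r ^ j) ^ (1:ℝ) := by
            rw [← Real.rpow_add hrj0]; ring_nf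
        _ = (r ^ j) ^ (p - 1) * r ^ j := by rw [Real.rpow_one]
        _ ≤ (r ^ j) ^ (p - 1) * (1 + p * (r ^ j - 1)) := by
            apply mul_le_mul_of_nonneg_left hden (Real.rpow_nonneg hrj0.le _)
    have hB0 : (0:ℝ) ≤ (r ^ j) ^ p / (1 + p * (r ^ j - 1)) :=
      div_nonneg (Real.rpow_nonneg hrj0.le _) hden0.le
    calc ((1 + ((P / p) ^ j - 1)) ^ p / (1 + p * ((P / p) ^ j - 1))) ^ (κ * θ ^ j)
        = ((r ^ j) ^ p / (1 + p * (r ^ j - 1))) ^ (κ * θ ^ j) := by rw [hbase]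
      _ ≤ ((r ^ j) ^ (p - 1)) ^ (κ * θ ^ j) :=
          Real.rpow_le_rpow hB0 hB hexp0
      _ = Real.exp (c * ((j : ℝ) * θ ^ j)) := by
          have h1 : (r ^ j) ^ (p - 1) = Real.exp ((p - 1) * ((j:ℝ) * Real.log r)) := by
            rw [Real.rpow_def_of_pos hrj0, Real.log_pow]
            ring_nf
          rw [h1, ← Real.exp_mul]
          congr 1
          ring
  calc (∏ j ∈ Finset.range (n + 1),
        ((1 + ((P / p) ^ j - 1)) ^ p / (1 + p * ((P / p) ^ j - 1))) ^ (κ * θ ^ j))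
      ≤ ∏ j ∈ Finset.range (n + 1), Real.exp (c * ((j : ℝ) * θ ^ j)) := by
        apply Finset.prod_le_prod
        · intro j _
          apply Real.rpow_nonneg
          apply div_nonneg
          · have : 1 + ((P / p) ^ j - 1) = r ^ j := by rw [hrdef]; ring
            rw [this]
            exact Real.rpow_nonneg (pow_nonneg hr0.le j) _
          · have hrj1 : (1:ℝ) ≤ r ^ j := one_le_pow₀ hr1.le
            nlinarith
        · exact key
    _ = Real.exp (∑ j ∈ Finset.range (n + 1), c * ((j : ℝ) * θ ^ j)) :=
        (Real.exp_sum _ _).symm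
    _ ≤ Real.exp (κ * (p - 1) * Real.log (1 / θ) * (θ / (1 - θ) ^ 2)) := by
        apply Real.exp_le_exp.mpr
        rw [hrinv, ← Finset.mul_sum]
        have hHS : HasSum (fun j : ℕ => (j : ℝ) * θ ^ j) (θ / (1 - θ) ^ 2) :=
          hasSum_coe_mul_geometric_of_norm_lt_one
            (by rw [Real.norm_eq_abs, abs_of_pos hθ0]; exact hθ1)
        have hsum : ∑ j ∈ Finset.range (n + 1), (j : ℝ) * θ ^ j ≤ θ / (1 - θ) ^ 2 :=
          sum_le_hasSum _ (fun j _ => mul_nonneg (Nat.cast_nonneg j) (pow_nonneg hθ0.le j)) hHS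
        exact mul_le_mul_of_nonneg_left hsum hc0
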